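/- Suppose for a sequence of nonnegative reals a_n with a_n/n → 0 we have Φ_{P}(a_n)/n → 0 (no prominent families for P := P^{[n]}). If additionally the same property holds for Pᵏ (i.e., for each sequence b_n = o(n), Φ_{(P^{[n]})ᵏ}(b_n) = o(n)), then it holds for P^{k+1}: for every sequence a_n = o(n), Φ_{(P^{[n]})^{k+1}}(a_n) = o(n). -/

import Mathlib

open Filter

/-- `Φ_P(s)`: the maximum total one-time influence of a set of `s` nodes. -/
noncomputable def Phi {n : ℕ} (P : Matrix (Fin n) (Fin n) ℝ) (s : ℕ) : ℝ :=
  sSup ((fun B : Finset (Fin n) => ∑ i, ∑ j ∈ B, P i j) ''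
    {B : Finset (Fin n) | B.card = s})

/-- Extension of `Φ_P` to nonnegative real arguments: `Φ_P(x) = Φ_P(min ⌊x⌋ n)`. -/
noncomputable def PhiR {n : ℕ} (P : Matrix (Fin n) (Fin n) ℝ) (x : ℝ) : ℝ :=
  Phi P (min ⌊x⌋₊ n)

lemma phi_bddAbove {n : ℕ} (P : Matrix (Fin n) (Fin n) ℝ) (s : ℕ) :
    BddAbove ((fun B : Finset (Fin n) => ∑ i, ∑ j ∈ B, P i j) ''
      {B : Finset (Fin n) | B.card = s}) :=
  (Set.toFinite _).bddAbove

lemma le_phi {n : ℕ} (P : Matrix (Fin n) (Fin n) ℝ) {s : ℕ} (B : Finset (Fin n))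
    (hB : B.card = s) : ∑ i, ∑ j ∈ B, P i j ≤ Phi P s :=
  le_csSup (phi_bddAbove P s) ⟨B, hB, rfl⟩

lemma phi_le {n : ℕ} (P : Matrix (Fin n) (Fin n) ℝ) {s : ℕ} (hs : s ≤ n) {c : ℝ}
    (h : ∀ B : Finset (Fin n), B.card = s → ∑ i, ∑ j ∈ B, P i j ≤ c) :
    Phi P s ≤ c := by
  apply csSup_le
  · obtain ⟨B, _, hB⟩ := Finset.exists_subset_card_eq (s := (Finset.univ : Finset (Fin n))) (n := s)
      (by simpa using hs)
    exact ⟨_, ⟨B, hB, rfl⟩⟩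
  · rintro x ⟨B, hB, rfl⟩
    exact h B hB

lemma phi_mono {n : ℕ} {P : Matrix (Fin n) (Fin n) ℝ} (hP : ∀ i j, 0 ≤ P i j)
    {s t : ℕ} (hst : s ≤ t) (ht : t ≤ n) : Phi P s ≤ Phi P t := by
  apply phi_le _ (le_trans hst ht)
  intro B hB
  obtain ⟨C, _, _, hC⟩ := Finset.exists_subsuperset_card_eq B.subset_univ
    (show B.card ≤ t by omega) (by simpa using ht)
  calc ∑ i, ∑ j ∈ B, P i j ≤ ∑ i, ∑ j ∈ C, P i j := by
        refine Finset.sum_le_sum fun i _ => ?_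
        exact Finset.sum_le_sum_of_subset_of_nonneg (by assumption)
          (fun j _ _ => hP i j)
    _ ≤ Phi P t := le_phi P C hC

lemma phi_nonneg {n : ℕ} {P : Matrix (Fin n) (Fin n) ℝ} (hP : ∀ i j, 0 ≤ P i j)
    {s : ℕ} (hs : s ≤ n) : 0 ≤ Phi P s := by
  obtain ⟨B, _, hB⟩ := Finset.exists_subset_card_eq (s := (Finset.univ : Finset (Fin n))) (n := s)
    (by simpa using hs)
  refine le_trans ?_ (le_phi P B hB)
  exact Finset.sum_nonneg fun i _ => Finset.sum_nonneg fun j _ => hP i j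

lemma phiR_nonneg {n : ℕ} {P : Matrix (Fin n) (Fin n) ℝ} (hP : ∀ i j, 0 ≤ P i j)
    (x : ℝ) : 0 ≤ PhiR P x :=
  phi_nonneg hP (min_le_right _ _)

lemma pow_entry_nonneg {n : ℕ} {P : Matrix (Fin n) (Fin n) ℝ}
    (hP : ∀ i j, 0 ≤ P i j) (k : ℕ) : ∀ i j, 0 ≤ (P ^ k) i j := by
  induction k with
  | zero =>
    intro i j
    simp only [pow_zero, Matrix.one_apply]
    positivity
  | succ m ih =>
    intro i j
    rw [pow_succ, Matrix.mul_apply]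
    exact Finset.sum_nonneg fun m' _ => mul_nonneg (ih i m') (hP m' j)

lemma pow_row_sum {n : ℕ} {P : Matrix (Fin n) (Fin n) ℝ}
    (hP : ∀ i, ∑ j, P i j = 1) (k : ℕ) : ∀ i, ∑ j, (P ^ k) i j = 1 := by
  induction k with
  | zero =>
    intro i
    simp [Matrix.one_apply]
  | succ m ih =>
    intro i
    simp only [pow_succ, Matrix.mul_apply]
    rw [Finset.sum_comm]
    calc ∑ m', ∑ j, (P ^ m) i m' * P m' j
        = ∑ m', (P ^ m) i m' * ∑ j, P m' j := by
          simp [Finset.mul_sum]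
      _ = 1 := by simp [hP, ih i]

/-- The key recursive influence bound: `Φ_{PQ}(s) ≤ Φ_P(Φ_Q(s)/ε) + ε n`. -/
lemma phi_mul_le {n : ℕ} {P Q : Matrix (Fin n) (Fin n) ℝ}
    (hPn : ∀ i j, 0 ≤ P i j) (hPr : ∀ i, ∑ j, P i j = 1)
    (hQn : ∀ i j, 0 ≤ Q i j) (hQr : ∀ i, ∑ j, Q i j = 1)
    {s : ℕ} (hs : s ≤ n) {ε : ℝ} (hε : 0 < ε) :
    Phi (P * Q) s ≤ PhiR P (Phi Q s / ε) + ε * n := by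
  apply phi_le _ hs
  intro B hB
  set c : Fin n → ℝ := fun m => ∑ j ∈ B, Q m j with hc
  have hc0 : ∀ m, 0 ≤ c m := fun m => Finset.sum_nonneg fun j _ => hQn m j
  have hc1 : ∀ m, c m ≤ 1 := by
    intro m
    rw [← hQr m]
    exact Finset.sum_le_sum_of_subset_of_nonneg B.subset_univ fun j _ _ => hQn m j
  have hsum : ∑ m, c m ≤ Phi Q s := le_phi Q B hB
  set T := Finset.univ.filter (fun m => ε ≤ c m) with hT
  have hTn : T.card ≤ n := le_trans (Finset.card_le_univ T) (by simp)
  have hTcard : (T.card : ℝ) ≤ Phi Q s / ε := by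
    rw [le_div_iff₀ hε]
    calc (T.card : ℝ) * ε = ∑ _m ∈ T, ε := by
          rw [Finset.sum_const, nsmul_eq_mul]
      _ ≤ ∑ m ∈ T, c m := Finset.sum_le_sum fun m hm => (Finset.mem_filter.mp hm).2
      _ ≤ ∑ m, c m :=
          Finset.sum_le_sum_of_subset_of_nonneg T.subset_univ fun m _ _ => hc0 m
      _ ≤ Phi Q s := hsum
  have hmain : ∑ i, ∑ j ∈ B, (P * Q) i j = ∑ m, (∑ i, P i m) * c m := by
    have step : ∑ i, ∑ j ∈ B, (P * Q) i j = ∑ i, ∑ m, P i m * c m := by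
      refine Finset.sum_congr rfl fun i _ => ?_
      simp only [Matrix.mul_apply]
      rw [Finset.sum_comm]
      exact Finset.sum_congr rfl fun m _ => (Finset.mul_sum _ _ _).symm
    rw [step, Finset.sum_comm]
    exact Finset.sum_congr rfl fun m _ => (Finset.sum_mul _ _ _).symm
  rw [hmain, ← Finset.sum_filter_add_sum_filter_not Finset.univ (fun m => ε ≤ c m), ← hT]
  have h1 : ∑ m ∈ T, (∑ i, P i m) * c m ≤ PhiR P (Phi Q s / ε) := by
    calc ∑ m ∈ T, (∑ i, P i m) * c m
        ≤ ∑ m ∈ T, (∑ i, P i m) * 1 := by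
          refine Finset.sum_le_sum fun m _ => ?_
          exact mul_le_mul_of_nonneg_left (hc1 m)
            (Finset.sum_nonneg fun i _ => hPn i m)
      _ = ∑ i, ∑ m ∈ T, P i m := by
          simp only [mul_one]
          exact Finset.sum_comm
      _ ≤ Phi P T.card := le_phi P T rfl
      _ ≤ PhiR P (Phi Q s / ε) := by
          refine phi_mono hPn ?_ (min_le_right _ _)
          exact le_min (Nat.le_floor hTcard) hTn
  have h2 : ∑ m ∈ Finset.univ.filter (fun m => ¬ ε ≤ c m), (∑ i, P i m) * c m
      ≤ ε * n := by
    calc ∑ m ∈ Finset.univ.filter (fun m => ¬ ε ≤ c m), (∑ i, P i m) * c m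
        ≤ ∑ m ∈ Finset.univ.filter (fun m => ¬ ε ≤ c m), (∑ i, P i m) * ε := by
          refine Finset.sum_le_sum fun m hm => ?_
          exact mul_le_mul_of_nonneg_left
            (le_of_lt (not_le.mp (Finset.mem_filter.mp hm).2))
            (Finset.sum_nonneg fun i _ => hPn i m)
      _ ≤ ∑ m, (∑ i, P i m) * ε := by
          refine Finset.sum_le_sum_of_subset_of_nonneg (Finset.filter_subset _ _)
            fun m _ _ => ?_
          exact mul_nonneg (Finset.sum_nonneg fun i _ => hPn i m) hε.le
      _ = ε * n := by
          rw [← Finset.sum_mul, Finset.sum_comm]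
          simp [hPr, mul_comm]
  linarith

/-- Induction step: if a sequence of row-stochastic matrices has no prominent
families, and the no-prominent-families property holds for the `k`-th powers,
then it also holds for the `(k+1)`-th powers. -/
theorem no_prominent_families_step (P : (n : ℕ) → Matrix (Fin n) (Fin n) ℝ)
    (hP_nonneg : ∀ n i j, 0 ≤ P n i j) (hP_row : ∀ (n : ℕ) (i : Fin n), ∑ j, P n i j = 1)
    (k : ℕ)
    (h1 : ∀ a : ℕ → ℝ, (∀ n, 0 ≤ a n) →
      Tendsto (fun n => a n / n) atTop (nhds 0) →
      Tendsto (fun n => PhiR (P n) (a n) / n) atTop (nhds 0))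
    (hk : ∀ b : ℕ → ℝ, (∀ n, 0 ≤ b n) →
      Tendsto (fun n => b n / n) atTop (nhds 0) →
      Tendsto (fun n => PhiR ((P n) ^ k) (b n) / n) atTop (nhds 0)) :
    ∀ a : ℕ → ℝ, (∀ n, 0 ≤ a n) →
      Tendsto (fun n => a n / n) atTop (nhds 0) →
      Tendsto (fun n => PhiR ((P n) ^ (k + 1)) (a n) / n) atTop (nhds 0) := by
  intro a ha ha'
  have hQn : ∀ n i j, 0 ≤ ((P n) ^ k) i j := fun n => pow_entry_nonneg (hP_nonneg n) k
  have hQr : ∀ n i, ∑ j, ((P n) ^ k) i j = 1 := fun n => pow_row_sum (hP_row n) k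
  set g : ℕ → ℝ := fun n => PhiR ((P n) ^ k) (a n) / n with hgdef
  have hg0 : ∀ n, 0 ≤ g n := fun n =>
    div_nonneg (phiR_nonneg (hQn n) _) (Nat.cast_nonneg n)
  have hg : Tendsto g atTop (nhds 0) := hk a ha ha'
  set ε : ℕ → ℝ := fun n => Real.sqrt (g n) + 1 / (n + 1) with hεdef
  have hεpos : ∀ n, 0 < ε n := fun n =>
    add_pos_of_nonneg_of_pos (Real.sqrt_nonneg _) (by positivity)
  have hε0 : Tendsto ε atTop (nhds 0) := by
    have h1 : Tendsto (fun n => Real.sqrt (g n)) atTop (nhds 0) := by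
      simpa using hg.sqrt
    have h2 : Tendsto (fun n : ℕ => 1 / ((n : ℝ) + 1)) atTop (nhds 0) :=
      tendsto_one_div_add_atTop_nhds_zero_nat
    simpa only [hεdef, add_zero] using h1.add h2
  set b : ℕ → ℝ := fun n => PhiR ((P n) ^ k) (a n) / ε n with hbdef
  have hb0 : ∀ n, 0 ≤ b n := fun n =>
    div_nonneg (phiR_nonneg (hQn n) _) (hεpos n).le
  have hbsq : ∀ n, b n / n ≤ Real.sqrt (g n) := by
    intro n
    have : b n / n = g n / ε n := by
      rw [hbdef, hgdef]
      simp only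
      rw [div_right_comm]
    rw [this]
    rcases eq_or_lt_of_le (hg0 n) with h | h
    · rw [← h]; simp [Real.sqrt_nonneg]
    · have hs : 0 < Real.sqrt (g n) := Real.sqrt_pos.mpr h
      calc g n / ε n ≤ g n / Real.sqrt (g n) := by
            apply div_le_div_of_nonneg_left (hg0 n) hs
            rw [hεdef]
            simp only
            have : (0:ℝ) < 1 / (n + 1) := by positivity
            linarith
        _ = Real.sqrt (g n) := Real.div_sqrt
  have hb' : Tendsto (fun n => b n / n) atTop (nhds 0) := by
    refine tendsto_of_tendsto_of_tendsto_of_le_of_le tendsto_const_nhds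
      (by simpa using hg.sqrt) ?_ hbsq
    intro n
    exact div_nonneg (hb0 n) (Nat.cast_nonneg n)
  have hPb := h1 b hb0 hb'
  have hub : ∀ n, PhiR ((P n) ^ (k + 1)) (a n) / n ≤ PhiR (P n) (b n) / n + ε n := by
    intro n
    rcases Nat.eq_zero_or_pos n with rfl | hn
    · simp only [Nat.cast_zero, div_zero]
      simpa using (hεpos 0).le
    have hnR : (0:ℝ) < n := by exact_mod_cast hn
    have key : PhiR ((P n) ^ (k + 1)) (a n) ≤ PhiR (P n) (b n) + ε n * n := by
      have : ((P n) ^ (k + 1)) = (P n) * ((P n) ^ k) := pow_succ' (P n) k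
      rw [PhiR, this]
      have hb_eq : b n = Phi ((P n) ^ k) (min ⌊a n⌋₊ n) / ε n := by rw [hbdef]; rfl
      calc Phi ((P n) * ((P n) ^ k)) (min ⌊a n⌋₊ n)
          ≤ PhiR (P n) (Phi ((P n) ^ k) (min ⌊a n⌋₊ n) / ε n) + ε n * n :=
            phi_mul_le (hP_nonneg n) (hP_row n) (hQn n) (hQr n)
              (min_le_right _ _) (hεpos n)
        _ = PhiR (P n) (b n) + ε n * n := by rw [← hb_eq]
    calc PhiR ((P n) ^ (k + 1)) (a n) / n
        ≤ (PhiR (P n) (b n) + ε n * n) / n := by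
          exact div_le_div_of_nonneg_right key hnR.le
      _ = PhiR (P n) (b n) / n + ε n := by
          rw [add_div, mul_div_assoc, div_self hnR.ne', mul_one]
  have hlb : ∀ n, 0 ≤ PhiR ((P n) ^ (k + 1)) (a n) / n := fun n =>
    div_nonneg (phiR_nonneg (pow_entry_nonneg (hP_nonneg n) (k + 1)) _) (Nat.cast_nonneg n)
  have hup : Tendsto (fun n => PhiR (P n) (b n) / n + ε n) atTop (nhds 0) := by
    simpa using hPb.add hε0
  exact tendsto_of_tendsto_of_tendsto_of_le_of_le tendsto_const_nhds hup hlb hub
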